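/- Let (c₁,…,c_m) ∈ ℤ^m be a quiddity cycle with m > 3. Then there exist two indices j, k ∈ {1,…,m} with |j−k| > 1 and {j,k} ≠ {1,m} such that |c_j| < 2 and |c_k| < 2 (i.e. c_j, c_k ∈ {−1, 0, 1}). -/

import Mathlib

/-- The matrix `η(c) = !![c, -1; 1, 0]` over `ℤ`. -/
def etaZ (c : ℤ) : Matrix (Fin 2) (Fin 2) ℤ := !![c, -1; 1, 0]

/-- Swap factors in a product equal to `-1`. -/
lemma neg_one_swap {A B : Matrix (Fin 2) (Fin 2) ℤ} (h : A * B = -1) : B * A = -1 := by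
  have h1 : A * (-B) = 1 := by rw [mul_neg, h, neg_neg]
  have h2 : (-B) * A = 1 := mul_eq_one_comm.mp h1
  have h3 : -(B * A) = 1 := by rw [← neg_mul]; exact h2
  rw [← neg_neg (B * A), h3]

/-- Growth lemma: products of `etaZ` over entries of absolute value `≥ 2`. -/
lemma growth (l : List ℤ) (h : ∀ a ∈ l, 2 ≤ |a|) :
    ((l.length : ℤ) + 1) ≤ |((l.map etaZ).prod) 0 0| ∧
      |((l.map etaZ).prod) 1 0| < |((l.map etaZ).prod) 0 0| := by
  induction l with
  | nil => simp [Matrix.one_apply]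
  | cons a l ih =>
    have ha : 2 ≤ |a| := h a List.mem_cons_self
    obtain ⟨ih1, ih2⟩ := ih (fun z hz => h z (List.mem_cons_of_mem a hz))
    set M := (l.map etaZ).prod with hM
    have e00 : ((List.map etaZ (a :: l)).prod) 0 0 = a * M 0 0 - M 1 0 := by
      simp [etaZ, Matrix.mul_apply, Fin.sum_univ_two]; ring
    have e10 : ((List.map etaZ (a :: l)).prod) 1 0 = M 0 0 := by
      simp [etaZ, Matrix.mul_apply, Fin.sum_univ_two]; rfl
    rw [e00, e10]
    have hkey : |a * M 0 0| - |M 1 0| ≤ |a * M 0 0 - M 1 0| :=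
      abs_sub_abs_le_abs_sub _ _
    rw [abs_mul] at hkey
    have hM0 : 0 ≤ |M 0 0| := abs_nonneg _
    have hM1 : 0 ≤ |M 1 0| := abs_nonneg _
    constructor
    · simp only [List.length_cons]
      push_cast
      nlinarith
    · nlinarith

lemma mod_two_cases (x m : ℕ) (hm : 0 < m) (hx : x < 2 * m) :
    (m ≤ x ∧ x % m = x - m) ∨ (x < m ∧ x % m = x) := by
  rcases Nat.lt_or_ge x m with h' | h'
  · exact Or.inr ⟨h', Nat.mod_eq_of_lt h'⟩
  · refine Or.inl ⟨h', ?_⟩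
    rw [Nat.mod_eq_sub_mod h', Nat.mod_eq_of_lt (by omega)]

/-- For a quiddity cycle `(c₁, …, c_m)` over `ℤ` with `m > 3` there are indices
`j, k ∈ {1, …, m}` with `|j − k| > 1`, `{j, k} ≠ {1, m}`, `|c_j| < 2` and `|c_k| < 2`. -/
theorem stmt18 (m : ℕ) (hm : 3 < m) (c : ℕ → ℤ)
    (hq : ((List.range m).map (fun k => etaZ (c (k + 1)))).prod = -1) :
    ∃ j k : ℕ, 1 ≤ j ∧ j ≤ m ∧ 1 ≤ k ∧ k ≤ m ∧
      1 < |(j : ℤ) - (k : ℤ)| ∧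
      ¬((j = 1 ∧ k = m) ∨ (j = m ∧ k = 1)) ∧
      |c j| < 2 ∧ |c k| < 2 := by
  by_contra hcon
  push_neg at hcon
  -- any two small indices are (cyclically) adjacent
  have hsmall : ∀ j k : ℕ, 1 ≤ j → j ≤ m → 1 ≤ k → k ≤ m → |c j| < 2 → |c k| < 2 →
      |(j : ℤ) - (k : ℤ)| ≤ 1 ∨ (j = 1 ∧ k = m) ∨ (j = m ∧ k = 1) := by
    intro j k hj1 hjm hk1 hkm hcj hck
    by_contra hno
    push_neg at hno
    obtain ⟨h1, h2⟩ := hno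
    have := hcon j k hj1 hjm hk1 hkm h1 h2 hcj
    omega
  -- find p such that every small index is p, p+1 or (if p = m) 1
  have hP : ∃ p : ℕ, 1 ≤ p ∧ p ≤ m ∧ ∀ t : ℕ, 1 ≤ t → t ≤ m → |c t| < 2 →
      t = p ∨ t = p + 1 ∨ (p = m ∧ t = 1) := by
    by_cases hA : |c 1| < 2 ∧ |c m| < 2
    · refine ⟨m, by omega, le_refl m, fun t ht1 htm hct => ?_⟩
      have e1 := hsmall t 1 ht1 htm (by omega) (by omega) hct hA.1
      have e2 := hsmall t m ht1 htm (by omega) (le_refl m) hct hA.2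
      rw [abs_le] at e1 e2
      push_cast at e1 e2
      omega
    · by_cases hS : ∃ s : ℕ, 1 ≤ s ∧ s ≤ m ∧ |c s| < 2
      · classical
        set s := Nat.find hS with hs
        obtain ⟨hs1, hsm, hsc⟩ := Nat.find_spec hS
        refine ⟨s, hs1, hsm, fun t ht1 htm hct => ?_⟩
        have hst : s ≤ t := by
          by_contra hlt
          exact Nat.find_min hS (by omega) ⟨ht1, htm, hct⟩
        rcases eq_or_lt_of_le hst with heq | hlt
        · exact Or.inl heq.symm
        · have := hsmall s t hs1 hsm ht1 htm hsc hct
          rcases this with hadj | ⟨he1, he2⟩ | ⟨he1, he2⟩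
          · rw [abs_le] at hadj
            push_cast at hadj
            omega
          · exact absurd ⟨he1 ▸ hsc, he2 ▸ hct⟩ hA
          · omega
      · push_neg at hS
        exact ⟨1, le_refl 1, by omega, fun t ht1 htm hct => absurd hct (not_lt.mpr (hS t ht1 htm))⟩
  obtain ⟨p, hp1, hpm, hp⟩ := hP
  set f : ℕ → Matrix (Fin 2) (Fin 2) ℤ := fun k => etaZ (c (k + 1)) with hf
  set r : ℕ := (p + 1) % m with hr
  have hrm : r < m := Nat.mod_lt _ (by omega)
  -- all entries among the first m-2 of the rotated cycle are big
  have hbig : ∀ i : ℕ, i < m - 2 → 2 ≤ |c ((i + r) % m + 1)| := by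
    intro i hi
    by_contra hsm
    push_neg at hsm
    have e : (i + r) % m = (i + (p + 1)) % m := Nat.add_mod_mod i (p + 1) m
    have hx := mod_two_cases (i + (p + 1)) m (by omega) (by omega)
    have ht1 : 1 ≤ (i + r) % m + 1 := by omega
    have htm : (i + r) % m + 1 ≤ m := by
      have := Nat.mod_lt (i + r) (show 0 < m by omega)
      omega
    have := hp ((i + r) % m + 1) ht1 htm hsm
    omega
  -- rotate the product
  have hrot : (((List.range m).rotate r).map f).prod = -1 := by
    rw [List.map_rotate]
    have hlen : r ≤ ((List.range m).map f).length := by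
      simpa using hrm.le
    rw [List.rotate_eq_drop_append_take hlen, List.prod_append]
    apply neg_one_swap
    rw [← List.prod_append, List.take_append_drop]
    exact hq
  set rL : List ℕ := (List.range m).rotate r with hrL
  have hlenr : rL.length = m := by simp [hrL]
  set l₁ : List ℕ := rL.take (m - 2) with hl₁
  set l₂ : List ℕ := rL.drop (m - 2) with hl₂
  have hlen1 : l₁.length = m - 2 := by
    rw [hl₁, List.length_take, hlenr]
    omega
  have hlen2 : l₂.length = 2 := by
    rw [hl₂, List.length_drop, hlenr]
    omega
  obtain ⟨x, y, hxy⟩ := List.length_eq_two.mp hlen2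
  have hsplit : l₁ ++ [x, y] = rL := by rw [← hxy]; exact List.take_append_drop _ _
  have hprod : ((l₁.map (fun i => c (i + 1))).map etaZ).prod *
      (etaZ (c (x + 1)) * etaZ (c (y + 1))) = -1 := by
    rw [List.map_map]
    have : (rL.map f).prod = -1 := hrot
    rw [← hsplit] at this
    rw [List.map_append, List.prod_append] at this
    simpa [hf, Function.comp_def] using this
  set a := c (x + 1)
  set b := c (y + 1)
  set P := ((l₁.map (fun i => c (i + 1))).map etaZ).prod with hPdef
  set Q := etaZ a * etaZ b with hQ
  set R : Matrix (Fin 2) (Fin 2) ℤ := !![(-1 : ℤ), a; -b, a * b - 1] with hRdef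
  have hQR : Q * R = 1 := by
    rw [hQ, hRdef]
    ext i j
    fin_cases i <;> fin_cases j <;>
      simp [etaZ, Matrix.mul_apply, Fin.sum_univ_two, Matrix.one_apply] <;> ring
  have hP : P = -R := by
    have h5 : P * (Q * R) = -1 * R := by rw [← mul_assoc, hprod]
    rw [hQR, mul_one] at h5
    rw [h5, neg_one_mul]
  have hP00 : P 0 0 = 1 := by
    rw [hP, hRdef]
    simp [Matrix.neg_apply]
  -- the growth lemma contradicts this
  have hgrow := growth (l₁.map (fun i => c (i + 1))) ?_
  · rw [← hPdef, hP00] at hgrow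
    have hlen' : (l₁.map (fun i => c (i + 1))).length = m - 2 := by
      simp [hlen1]
    rw [hlen'] at hgrow
    have := hgrow.1
    simp only [abs_one] at this
    have hc : ((m - 2 : ℕ) : ℤ) + 1 ≤ 1 := this
    omega
  · intro z hz
    rw [List.mem_map] at hz
    obtain ⟨i, hil, hiz⟩ := hz
    obtain ⟨j, hj, hji⟩ := List.mem_iff_getElem.mp hil
    have hj2 : j < m - 2 := by rwa [hlen1] at hj
    have hjr : j < rL.length := by omega
    have h1 : l₁[j] = rL[j] := by
      simp [hl₁]
    have h2 : rL[j] = (j + r) % m := by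
      simp [hrL, List.getElem_rotate]
    rw [← hiz, ← hji, h1, h2]
    exact hbig j hj2
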